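/- Assume the columns x₁,…,x_p of X are pairwise orthogonal and all nonzero, and let γ̂ ∈ [0,∞)^p satisfy the coordinatewise fixed-point property: for every j, with C_j := σ²Iₙ + Σ_{k≠j} γ̂_k x_k x_kᵀ, γ̂_j = ((x_jᵀC_j⁻¹y)² − x_jᵀC_j⁻¹x_j)/(x_jᵀC_j⁻¹x_j)² if (x_jᵀC_j⁻¹y)² > x_jᵀC_j⁻¹x_j and γ̂_j = 0 otherwise. Then γ̂ is given explicitly by: γ̂_j = (⟨y, x_j⟩² − σ²‖x_j‖²)/‖x_j‖⁴ if ⟨y, x_j⟩² > σ²‖x_j‖², and γ̂_j = 0 otherwise. -/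

import Mathlib

open Matrix

lemma vecMulVec_mulVec' {n : ℕ} (w v u : Fin n → ℝ) :
    vecMulVec w v *ᵥ u = (v ⬝ᵥ u) • w := by
  funext i
  simp only [vecMulVec, mulVec, dotProduct, Matrix.of_apply, Pi.smul_apply, smul_eq_mul,
    Finset.sum_mul]
  exact Finset.sum_congr rfl fun k _ => by ring

lemma vecMulVec_transpose' {n : ℕ} (w : Fin n → ℝ) :
    (vecMulVec w w)ᵀ = vecMulVec w w := by
  funext i k
  simp [vecMulVec, mul_comm]

lemma dotProduct_sum' {n p : ℕ} (s : Finset (Fin p)) (v : Fin n → ℝ) (f : Fin p → Fin n → ℝ) :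
    v ⬝ᵥ (∑ k ∈ s, f k) = ∑ k ∈ s, v ⬝ᵥ f k := by
  simp only [dotProduct, Finset.sum_apply, Finset.mul_sum]
  exact Finset.sum_comm

lemma sum_mulVec' {n p : ℕ} (s : Finset (Fin p)) (M : Fin p → Matrix (Fin n) (Fin n) ℝ)
    (v : Fin n → ℝ) : (∑ k ∈ s, M k) *ᵥ v = ∑ k ∈ s, M k *ᵥ v := by
  funext i
  simp only [mulVec, dotProduct, Finset.sum_apply, Matrix.sum_apply, Finset.sum_mul]
  exact Finset.sum_comm

/-- Explicit form of the sparse Bayesian learning maximizer under an orthogonal design: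
if `γhat ∈ [0,∞)^p` satisfies the coordinatewise fixed-point property (with
`C_j = σ² Iₙ + Σ_{k≠j} γhat_k x_k x_kᵀ`), then
`γhat_j = (⟨y,x_j⟩² - σ²‖x_j‖²)/‖x_j‖⁴` if `⟨y,x_j⟩² > σ²‖x_j‖²` and `γhat_j = 0`
otherwise. -/
theorem sbl_fixed_point_explicit_orthogonal (n p : ℕ) (y : Fin n → ℝ)
    (x : Fin p → Fin n → ℝ)
    (horth : ∀ j k, j ≠ k → x j ⬝ᵥ x k = 0) (hxne : ∀ j, x j ≠ 0)
    (σ2 : ℝ) (hσ : 0 < σ2)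
    (γhat : Fin p → ℝ) (hpos : ∀ j, 0 ≤ γhat j)
    (Cj : Fin p → Matrix (Fin n) (Fin n) ℝ)
    (hCj : ∀ j, Cj j = σ2 • (1 : Matrix (Fin n) (Fin n) ℝ) +
      ∑ k ∈ Finset.univ.erase j, γhat k • vecMulVec (x k) (x k))
    (hfix : ∀ j : Fin p,
      if x j ⬝ᵥ (Cj j)⁻¹.mulVec (x j) < (x j ⬝ᵥ (Cj j)⁻¹.mulVec y)^2
      then γhat j = ((x j ⬝ᵥ (Cj j)⁻¹.mulVec y)^2 - x j ⬝ᵥ (Cj j)⁻¹.mulVec (x j)) /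
        (x j ⬝ᵥ (Cj j)⁻¹.mulVec (x j))^2
      else γhat j = 0) :
    ∀ j : Fin p,
      if σ2 * (x j ⬝ᵥ x j) < (y ⬝ᵥ x j)^2
      then γhat j = ((y ⬝ᵥ x j)^2 - σ2 * (x j ⬝ᵥ x j)) / (x j ⬝ᵥ x j)^2
      else γhat j = 0 := by
  intro j
  have hsym : (Cj j)ᵀ = Cj j := by
    rw [hCj j, transpose_add, transpose_smul, transpose_one, transpose_sum]
    congr 1
    exact Finset.sum_congr rfl fun k _ => by rw [transpose_smul, vecMulVec_transpose']
  have hpd : (Cj j).PosDef := by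
    refine Matrix.PosDef.of_dotProduct_mulVec_pos ?_ ?_
    · show (Cj j)ᴴ = Cj j
      ext i k
      simpa [conjTranspose_apply] using congrFun (congrFun hsym i) k
    · intro v hv
      have hstar : (star v : Fin n → ℝ) = v := by simp
      rw [hstar, hCj j, add_mulVec, Matrix.smul_mulVec, one_mulVec,
        dotProduct_add, dotProduct_smul]
      have h1 : 0 < σ2 * (v ⬝ᵥ v) := by
        apply mul_pos hσ
        rcases lt_or_eq_of_le (Finset.sum_nonneg fun i _ => mul_self_nonneg (v i)) with h | h
        · exact h
        · exact absurd (dotProduct_self_eq_zero.mp h.symm) hv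
      have h2 : 0 ≤ v ⬝ᵥ (∑ k ∈ Finset.univ.erase j, γhat k • vecMulVec (x k) (x k)) *ᵥ v := by
        rw [sum_mulVec', dotProduct_sum']
        refine Finset.sum_nonneg fun k _ => ?_
        rw [Matrix.smul_mulVec, dotProduct_smul, vecMulVec_mulVec', dotProduct_smul]
        rw [smul_eq_mul, smul_eq_mul, dotProduct_comm v (x k)]
        exact mul_nonneg (hpos k) (mul_self_nonneg _)
      calc (0:ℝ) < σ2 • (v ⬝ᵥ v) + 0 := by simpa using h1
        _ ≤ _ := by gcongr
  have hunit : IsUnit (Cj j).det := hpd.det_pos.ne'.isUnit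
  have hCx : Cj j *ᵥ x j = σ2 • x j := by
    rw [hCj j, add_mulVec, Matrix.smul_mulVec, one_mulVec, sum_mulVec']
    have : ∀ k ∈ Finset.univ.erase j, (γhat k • vecMulVec (x k) (x k)) *ᵥ x j = 0 := by
      intro k hk
      rw [Matrix.smul_mulVec, vecMulVec_mulVec', horth k j (Finset.ne_of_mem_erase hk)]
      simp
    rw [Finset.sum_congr rfl this]
    simp
  have hinvx : (Cj j)⁻¹ *ᵥ x j = σ2⁻¹ • x j := by
    have h1 : (Cj j)⁻¹ *ᵥ (Cj j *ᵥ x j) = x j := by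
      rw [Matrix.mulVec_mulVec, Matrix.nonsing_inv_mul _ hunit, one_mulVec]
    rw [hCx, Matrix.mulVec_smul] at h1
    have h2 := congrArg (fun v => σ2⁻¹ • v) h1
    simpa [smul_smul, inv_mul_cancel₀ hσ.ne'] using h2
  set s := x j ⬝ᵥ x j with hs
  set t := y ⬝ᵥ x j with ht
  have hspos : 0 < s := by
    rcases lt_or_eq_of_le (Finset.sum_nonneg fun i _ => mul_self_nonneg (x j i)) with h | h
    · exact h
    · exact absurd (dotProduct_self_eq_zero.mp h.symm) (hxne j)
  have ha : x j ⬝ᵥ (Cj j)⁻¹ *ᵥ x j = σ2⁻¹ * s := by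
    rw [hinvx, dotProduct_smul, smul_eq_mul]
  have hsymminv : (Cj j)⁻¹ᵀ = (Cj j)⁻¹ := by
    rw [Matrix.transpose_nonsing_inv, hsym]
  have hb : x j ⬝ᵥ (Cj j)⁻¹ *ᵥ y = σ2⁻¹ * t := by
    rw [Matrix.dotProduct_mulVec, ← Matrix.mulVec_transpose, hsymminv, hinvx]
    rw [smul_dotProduct, smul_eq_mul, dotProduct_comm]
  have hfj := hfix j
  rw [ha, hb] at hfj
  have hσ2 : (0:ℝ) < σ2^2 := by positivity
  have e1 : σ2^2 * (σ2⁻¹ * s) = σ2 * s := by field_simp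
  have e2 : σ2^2 * ((σ2⁻¹ * t)^2) = t^2 := by field_simp
  have hcond : (σ2⁻¹ * s < (σ2⁻¹ * t)^2) ↔ (σ2 * s < t^2) := by
    rw [← e1, ← e2, mul_lt_mul_iff_of_pos_left hσ2]
  by_cases hc : σ2 * s < t^2
  · rw [if_pos hc]
    rw [if_pos (hcond.mpr hc)] at hfj
    rw [hfj]
    field_simp
  · rw [if_neg hc]
    rw [if_neg (fun h => hc (hcond.mp h))] at hfj
    exact hfj
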